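/- Let (X_i) be a sequence of independent identically distributed Bernoulli random variables with P(X_i = 1) = p. Then for any δ > 0 and n ∈ ℤ⁺, P(Σ_{i=1}^n X_i ≥ (1+δ)np) ≤ exp(−(δ²/(2+δ))·np). -/

import Mathlib

open Real

lemma key_log (δ : ℝ) (hδ : 0 ≤ δ) : 2*δ/(2+δ) ≤ Real.log (1+δ) := by
  set f : ℝ → ℝ := fun x => Real.log (1+x) - 2*x/(2+x) with hf
  have hderiv : ∀ x : ℝ, 0 ≤ x → HasDerivAt f (1/(1+x) - 4/(2+x)^2) x := by
    intro x hx
    have h1x : (1:ℝ)+x ≠ 0 := by positivity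
    have h2x : (2:ℝ)+x ≠ 0 := by positivity
    have h1 : HasDerivAt (fun y : ℝ => Real.log (1+y)) (1/(1+x)) x := by
      have := (Real.hasDerivAt_log h1x).comp x (((hasDerivAt_id x).const_add 1))
      simpa [one_div, Function.comp_def] using this
    have h2 : HasDerivAt (fun y : ℝ => 2*y/(2+y)) (4/(2+x)^2) x := by
      have ha : HasDerivAt (fun y : ℝ => 2*y) 2 x := by
        simpa using (hasDerivAt_id x).const_mul 2
      have hb : HasDerivAt (fun y : ℝ => 2+y) 1 x := (hasDerivAt_id x).const_add 2
      have := ha.div hb h2x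
      exact this.congr_deriv (by ring)
    exact h1.sub h2
  have hmono : MonotoneOn f (Set.Ici 0) := by
    apply monotoneOn_of_deriv_nonneg (convex_Ici 0)
    · apply ContinuousOn.sub
      · apply ContinuousOn.log (by fun_prop)
        intro x hx; simp only [Set.mem_Ici] at hx; positivity
      · apply ContinuousOn.div (by fun_prop) (by fun_prop)
        intro x hx; simp only [Set.mem_Ici] at hx; positivity
    · intro x hx
      rw [interior_Ici] at hx
      exact ((hderiv x (le_of_lt hx)).differentiableAt).differentiableWithinAt
    · intro x hx
      rw [interior_Ici] at hx
      have hx' : (0:ℝ) < x := hx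
      rw [(hderiv x hx'.le).deriv]
      rw [sub_nonneg, div_le_div_iff₀ (by positivity) (by linarith)]
      nlinarith
  have h0 : f 0 = 0 := by simp [hf]
  have := hmono (Set.mem_Ici.2 le_rfl) (Set.mem_Ici.2 hδ) hδ
  rw [h0] at this
  simp only [hf] at this
  linarith

lemma key_exp (δ : ℝ) (hδ : 0 ≤ δ) : Real.exp (2*δ/(2+δ)) ≤ 1 + δ := by
  calc Real.exp (2*δ/(2+δ)) ≤ Real.exp (Real.log (1+δ)) :=
        Real.exp_le_exp.2 (key_log δ hδ)
    _ = 1 + δ := Real.exp_log (by linarith)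

open MeasureTheory ProbabilityTheory

theorem stmt6 {Ω : Type*} [MeasurableSpace Ω] (μ : Measure Ω) [IsProbabilityMeasure μ]
    (X : ℕ → Ω → ℝ) (p : ℝ)
    (hmeas : ∀ i, Measurable (X i))
    (hindep : iIndepFun X μ)
    (hident : ∀ i j, IdentDistrib (X i) (X j) μ μ)
    (h01 : ∀ i ω, X i ω = 0 ∨ X i ω = 1)
    (hp1 : ∀ i, μ {ω | X i ω = 1} = ENNReal.ofReal p)
    (δ : ℝ) (hδ : 0 < δ) (n : ℕ) (hn : 0 < n) :
    μ {ω | (1 + δ) * n * p ≤ ∑ i ∈ Finset.range n, X i ω}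
      ≤ ENNReal.ofReal (Real.exp (-(δ ^ 2 / (2 + δ)) * (n * p))) := by
  have h2δ : (0:ℝ) < 2 + δ := by linarith
  have hcδ : (0:ℝ) ≤ δ^2/(2+δ) := by positivity
  rcases le_or_gt p 0 with hp | hp
  · -- trivial case p ≤ 0
    have hnp : (n:ℝ) * p ≤ 0 := mul_nonpos_of_nonneg_of_nonpos (Nat.cast_nonneg n) hp
    have h1 : (1:ℝ) ≤ Real.exp (-(δ ^ 2 / (2 + δ)) * (n * p)) := by
      rw [← Real.exp_zero]
      apply Real.exp_le_exp.2
      nlinarith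
    calc μ _ ≤ 1 := prob_le_one
      _ = ENNReal.ofReal 1 := by simp
      _ ≤ ENNReal.ofReal (Real.exp (-(δ ^ 2 / (2 + δ)) * (n * p))) :=
          ENNReal.ofReal_le_ofReal h1
  · -- main case 0 < p
    have hp1' : p ≤ 1 := by
      have := hp1 0 ▸ prob_le_one (μ := μ) (s := {ω | X 0 ω = 1})
      rwa [ENNReal.ofReal_le_one] at this
    set t : ℝ := 2*δ/(2+δ) with hts
    have ht0 : 0 ≤ t := by positivity
    have hsmeas : ∀ i, MeasurableSet {ω | X i ω = 1} := fun i =>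
      hmeas i (measurableSet_singleton 1)
    have hind : ∀ i, X i = Set.indicator {ω | X i ω = 1} (fun _ => (1:ℝ)) := by
      intro i
      funext ω
      rcases h01 i ω with h | h
      · rw [Set.indicator_of_notMem (by simp [h]), h]
      · rw [Set.indicator_of_mem (by simpa using h), h]
    have hXint : ∀ i, Integrable (X i) μ := by
      intro i
      rw [hind i]
      exact (integrable_const (1:ℝ)).indicator (hsmeas i)
    have hE : ∀ i, ∫ ω, X i ω ∂μ = p := by
      intro i
      conv_lhs => rw [show (fun ω => X i ω) = X i from rfl, hind i]
      rw [integral_indicator_const _ (hsmeas i), measureReal_def, hp1 i]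
      simp [ENNReal.toReal_ofReal hp.le]
    have hpt : ∀ i, (fun ω => Real.exp (t * X i ω)) =
        (fun ω => 1 + (Real.exp t - 1) * X i ω) := by
      intro i
      funext ω
      rcases h01 i ω with h | h <;> rw [h] <;> simp
    have hint : ∀ i, Integrable (fun ω => Real.exp (t * X i ω)) μ := by
      intro i
      rw [hpt i]
      exact (integrable_const (1:ℝ)).add ((hXint i).const_mul _)
    have hmgf : ∀ i, mgf (X i) μ t = 1 + (Real.exp t - 1) * p := by
      intro i
      rw [mgf]
      calc ∫ ω, Real.exp (t * X i ω) ∂μ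
          = ∫ ω, (1 + (Real.exp t - 1) * X i ω) ∂μ := by rw [hpt i]
        _ = ∫ ω, (1:ℝ) ∂μ + ∫ ω, (Real.exp t - 1) * X i ω ∂μ :=
            integral_add (integrable_const _) ((hXint i).const_mul _)
        _ = 1 + (Real.exp t - 1) * p := by
            rw [MeasureTheory.integral_const_mul, hE i]; simp
    have hc0 : 0 ≤ 1 + (Real.exp t - 1) * p := by
      nlinarith [Real.exp_pos t, Real.add_one_le_exp t]
    have hmgfsum : mgf (∑ i ∈ Finset.range n, X i) μ t
        = (1 + (Real.exp t - 1) * p) ^ n := by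
      rw [hindep.mgf_sum hmeas]
      rw [Finset.prod_congr rfl (fun i _ => hmgf i), Finset.prod_const,
        Finset.card_range]
    have hmgfle : mgf (∑ i ∈ Finset.range n, X i) μ t
        ≤ Real.exp (n * ((Real.exp t - 1) * p)) := by
      rw [hmgfsum]
      calc (1 + (Real.exp t - 1) * p) ^ n
          ≤ (Real.exp ((Real.exp t - 1) * p)) ^ n := by
            apply pow_le_pow_left₀ hc0
            linarith [Real.add_one_le_exp ((Real.exp t - 1) * p)]
        _ = Real.exp (n * ((Real.exp t - 1) * p)) := by
            rw [← Real.exp_nat_mul]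
    have hintsum : Integrable (fun ω => Real.exp (t * (∑ i ∈ Finset.range n, X i) ω)) μ :=
      hindep.integrable_exp_mul_sum hmeas (fun i _ => hint i)
    have hcher := measure_ge_le_exp_mul_mgf (μ := μ) (X := ∑ i ∈ Finset.range n, X i)
      ((1 + δ) * n * p) ht0 hintsum
    -- final exponent inequality
    have hexp : Real.exp (-t * ((1 + δ) * n * p)) * mgf (∑ i ∈ Finset.range n, X i) μ t
        ≤ Real.exp (-(δ ^ 2 / (2 + δ)) * (n * p)) := by
      calc Real.exp (-t * ((1 + δ) * n * p)) * mgf (∑ i ∈ Finset.range n, X i) μ t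
          ≤ Real.exp (-t * ((1 + δ) * n * p)) * Real.exp (n * ((Real.exp t - 1) * p)) := by
            apply mul_le_mul_of_nonneg_left hmgfle (Real.exp_pos _).le
        _ = Real.exp (-t * ((1 + δ) * n * p) + n * ((Real.exp t - 1) * p)) := by
            rw [← Real.exp_add]
        _ ≤ Real.exp (-(δ ^ 2 / (2 + δ)) * (n * p)) := by
            apply Real.exp_le_exp.2
            have hexpt : Real.exp t ≤ 1 + δ := key_exp δ hδ.le
            have hnp : (0:ℝ) ≤ (n:ℝ) * p := by positivity
            have h1 : Real.exp t - 1 - t * (1+δ) ≤ -(δ^2/(2+δ)) := by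
              have ht18 : t * (1+δ) = δ + δ^2/(2+δ) := by
                rw [hts]; field_simp; ring
              rw [ht18]; linarith
            calc -t * ((1 + δ) * n * p) + n * ((Real.exp t - 1) * p)
                = (Real.exp t - 1 - t * (1+δ)) * ((n:ℝ) * p) := by ring
              _ ≤ -(δ^2/(2+δ)) * ((n:ℝ)*p) := mul_le_mul_of_nonneg_right h1 hnp
              _ = -(δ ^ 2 / (2 + δ)) * (n * p) := by ring
    have hset : {ω | (1 + δ) * n * p ≤ ∑ i ∈ Finset.range n, X i ω}
        = {ω | (1 + δ) * n * p ≤ (∑ i ∈ Finset.range n, X i) ω} := by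
      ext ω; simp [Finset.sum_apply]
    rw [hset]
    have hfin : μ {ω | (1 + δ) * n * p ≤ (∑ i ∈ Finset.range n, X i) ω} ≠ ⊤ :=
      measure_ne_top μ _
    rw [← ENNReal.ofReal_toReal hfin]
    exact ENNReal.ofReal_le_ofReal (hcher.trans hexp)
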